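/- Reduction of the Liouville-Master equation to a memoryless master equation in the Markovian (constant hazard) case: Let S ≥ 1, μ ≥ 0, let q : {1,…,S} × {1,…,S} → ℝ, let A_s : ℝ → ℝ be continuous for each s, and let F_s : ℝ³ → ℝ (arguments (x,y,t)) be continuously differentiable for each s. Assume: (i) for all x ∈ ℝ, t > 0 and 0 < y < t, ∂_t F_s(x,y,t) + A_s(x)·∂_x F_s(x,y,t) + ∂_y F_s(x,y,t) = −μ·F_s(x,y,t); (ii) F_s(x,y,t) = 0 whenever y ≥ t; (iii) for all x and t > 0, F_s(x,0,t) = μ·∑_{j=1}^{S} q_{sj}·∫_0^t F_j(x,y,t) dy. Then the functions 𝓕_s(x,t) := ∫_0^t F_s(x,y,t) dy possess partial derivatives in t and x for t > 0 and satisfy ∂_t 𝓕_s(x,t) + A_s(x)·∂_x 𝓕_s(x,t) = μ·∑_{j=1}^{S} (q_{sj} − δ_{sj})·𝓕_j(x,t), where δ_{sj} is the Kronecker delta. -/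

import Mathlib

open MeasureTheory intervalIntegral

private lemma curve_deriv_comp3 {g : ℝ × ℝ × ℝ → ℝ} (hg : ContDiff ℝ 1 g)
    {c : ℝ → ℝ × ℝ × ℝ} {v : ℝ × ℝ × ℝ} {u : ℝ} (hc : HasDerivAt c v u) :
    HasDerivAt (fun r => g (c r)) (fderiv ℝ g (c u) v) u :=
  ((hg.differentiable one_ne_zero (c u)).hasFDerivAt).comp_hasDerivAt u hc

/-- Differentiation under the interval integral for jointly continuous data. -/
private lemma hasDerivAt_param_integral {G G' : ℝ → ℝ → ℝ}
    (hG : Continuous fun p : ℝ × ℝ => G p.1 p.2)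
    (hG' : Continuous fun p : ℝ × ℝ => G' p.1 p.2)
    (hd : ∀ u y, HasDerivAt (fun u' => G u' y) (G' u y) u)
    (a b u₀ : ℝ) :
    HasDerivAt (fun u => ∫ y in a..b, G u y) (∫ y in a..b, G' u₀ y) u₀ := by
  have hswap : Continuous fun p : ℝ × ℝ => G' p.2 p.1 :=
    hG'.comp (continuous_snd.prodMk continuous_fst)
  obtain ⟨C, hC⟩ := ((isCompact_uIcc (a := a) (b := b)).prod
    (isCompact_closedBall u₀ 1)).exists_bound_of_continuousOn hswap.continuousOn
  have hGy : ∀ u : ℝ, Continuous fun y => G u y := fun u =>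
    hG.comp (continuous_const.prodMk continuous_id)
  have hG'y : ∀ u : ℝ, Continuous fun y => G' u y := fun u =>
    hG'.comp (continuous_const.prodMk continuous_id)
  refine (intervalIntegral.hasDerivAt_integral_of_dominated_loc_of_deriv_le
    (F := fun u y => G u y) (F' := fun u y => G' u y) (bound := fun _ => C)
    (Metric.ball_mem_nhds u₀ one_pos) ?_ ?_ ?_ ?_ ?_ ?_).2
  · exact Filter.Eventually.of_forall fun u => ((hGy u).aestronglyMeasurable).restrict
  · exact (hGy u₀).intervalIntegrable a b
  · exact ((hG'y u₀).aestronglyMeasurable).restrict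
  · refine Filter.Eventually.of_forall fun y hy u hu => ?_
    exact hC (y, u) ⟨Set.uIoc_subset_uIcc hy, Metric.ball_subset_closedBall hu⟩
  · exact intervalIntegrable_const
  · exact Filter.Eventually.of_forall fun y _ u _ => hd u y

open MeasureTheory intervalIntegral in
/-- Reduction of the Liouville-Master equation to a memoryless master equation
in the Markovian (constant hazard) case (Section 2). -/
theorem liouville_master_markovian_reduction
    (S : ℕ) (hS : 1 ≤ S)
    (μ : ℝ) (hμ : 0 ≤ μ)
    (q : Fin S → Fin S → ℝ)
    (A : Fin S → ℝ → ℝ) (hA : ∀ s, Continuous (A s))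
    (F : Fin S → ℝ → ℝ → ℝ → ℝ)
    (hF : ∀ s, ContDiff ℝ 1 (fun p : ℝ × ℝ × ℝ => F s p.1 p.2.1 p.2.2))
    (hPDE : ∀ s (x y t : ℝ), 0 < t → 0 < y → y < t →
      deriv (fun t' => F s x y t') t + A s x * deriv (fun x' => F s x' y t) x
        + deriv (fun y' => F s x y' t) y = -μ * F s x y t)
    (hmem : ∀ s (x y t : ℝ), t ≤ y → F s x y t = 0)
    (hbdry : ∀ s (x t : ℝ), 0 < t →
      F s x 0 t = μ * ∑ j : Fin S, q s j * ∫ y in (0:ℝ)..t, F j x y t) :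
    ∀ s (x t : ℝ), 0 < t →
      ∃ dFt dFx : ℝ,
        HasDerivAt (fun t' => ∫ y in (0:ℝ)..t', F s x y t') dFt t
        ∧ HasDerivAt (fun x' => ∫ y in (0:ℝ)..t, F s x' y t) dFx x
        ∧ dFt + A s x * dFx
          = μ * ∑ j : Fin S, (q s j - if s = j then 1 else 0)
              * ∫ y in (0:ℝ)..t, F j x y t := by
  intro s x t ht
  set f : ℝ × ℝ × ℝ → ℝ := fun p => F s p.1 p.2.1 p.2.2 with hfdef
  have hfC : ContDiff ℝ 1 f := hF s
  have hfc : Continuous f := hfC.continuous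
  have hfderc : Continuous (fderiv ℝ f) := hfC.continuous_fderiv one_ne_zero
  set Dx : ℝ × ℝ × ℝ → ℝ := fun p => fderiv ℝ f p (1, 0, 0) with hDxdef
  set Dy : ℝ × ℝ × ℝ → ℝ := fun p => fderiv ℝ f p (0, 1, 0) with hDydef
  set Dt : ℝ × ℝ × ℝ → ℝ := fun p => fderiv ℝ f p (0, 0, 1) with hDtdef
  have hDxc : Continuous Dx := hfderc.clm_apply continuous_const
  have hDyc : Continuous Dy := hfderc.clm_apply continuous_const
  have hDtc : Continuous Dt := hfderc.clm_apply continuous_const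
  have hDx : ∀ x' y' t', HasDerivAt (fun u => F s u y' t') (Dx (x', y', t')) x' := by
    intro x' y' t'
    exact curve_deriv_comp3 hfC
      ((hasDerivAt_id x').prodMk ((hasDerivAt_const x' y').prodMk (hasDerivAt_const x' t')))
  have hDy : ∀ x' y' t', HasDerivAt (fun u => F s x' u t') (Dy (x', y', t')) y' := by
    intro x' y' t'
    exact curve_deriv_comp3 hfC
      ((hasDerivAt_const y' x').prodMk ((hasDerivAt_id y').prodMk (hasDerivAt_const y' t')))
  have hDt : ∀ x' y' t', HasDerivAt (fun u => F s x' y' u) (Dt (x', y', t')) t' := by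
    intro x' y' t'
    exact curve_deriv_comp3 hfC
      ((hasDerivAt_const t' x').prodMk ((hasDerivAt_const t' y').prodMk (hasDerivAt_id t')))
  -- continuity of slices
  have hcy : ∀ (u v : ℝ), Continuous fun y => F s u y v := fun u v =>
    hfc.comp (continuous_const.prodMk (continuous_id.prodMk continuous_const))
  -- Step 1: t-derivative
  have hzero_tail : ∀ t' T', t' ≤ T' → (∫ y in t'..T', F s x y t') = 0 := by
    intro t' T' h
    have heq : Set.EqOn (fun y => F s x y t') 0 (Set.uIcc t' T') := by
      intro y hy
      rw [Set.uIcc_of_le h] at hy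
      exact hmem s x y t' hy.1
    rw [intervalIntegral.integral_congr heq]
    simp
  have hsplit : ∀ t', t' ≤ t + 1 → (∫ y in (0:ℝ)..(t+1), F s x y t') = ∫ y in (0:ℝ)..t', F s x y t' := by
    intro t' h
    have h1 : IntervalIntegrable (fun y => F s x y t') volume 0 t' :=
      (hcy x t').intervalIntegrable 0 t'
    have h2 : IntervalIntegrable (fun y => F s x y t') volume t' (t+1) :=
      (hcy x t').intervalIntegrable t' (t+1)
    rw [← intervalIntegral.integral_add_adjacent_intervals h1 h2, hzero_tail t' (t+1) h, add_zero]
  have hev : (fun t' => ∫ y in (0:ℝ)..t', F s x y t')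
      =ᶠ[nhds t] (fun t' => ∫ y in (0:ℝ)..(t+1), F s x y t') := by
    filter_upwards [Iio_mem_nhds (show t < t + 1 by linarith)] with t' ht'
    exact (hsplit t' ht'.le).symm
  have hderT : HasDerivAt (fun t' => ∫ y in (0:ℝ)..(t+1), F s x y t')
      (∫ y in (0:ℝ)..(t+1), Dt (x, y, t)) t := by
    refine hasDerivAt_param_integral (G := fun u y => F s x y u)
      (G' := fun u y => Dt (x, y, u)) ?_ ?_ (fun u y => hDt x y u) 0 (t+1) t
    · exact hfc.comp (continuous_const.prodMk (continuous_snd.prodMk continuous_fst))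
    · exact hDtc.comp (continuous_const.prodMk (continuous_snd.prodMk continuous_fst))
  have hDt_zero : ∀ y, t < y → Dt (x, y, t) = 0 := by
    intro y hy
    have h0 : HasDerivAt (fun u => F s x y u) 0 t := by
      have hz : (fun u => F s x y u) =ᶠ[nhds t] fun _ => 0 := by
        filter_upwards [Iio_mem_nhds hy] with u hu
        exact hmem s x y u hu.le
      exact (hasDerivAt_const t (0:ℝ)).congr_of_eventuallyEq hz
    exact (hDt x y t).unique h0
  have htail : (∫ y in t..(t+1), Dt (x, y, t)) = 0 := by
    have hc : ∀ᵐ y ∂(volume : Measure ℝ), y ∈ Set.uIoc t (t+1) → Dt (x, y, t) = (0:ℝ) := by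
      refine Filter.Eventually.of_forall fun y hy => ?_
      rw [Set.uIoc_of_le (by linarith : t ≤ t + 1)] at hy
      exact hDt_zero y hy.1
    rw [show (0:ℝ) = ∫ y in t..(t+1), (0:ℝ) from (intervalIntegral.integral_zero).symm]
    exact intervalIntegral.integral_congr_ae hc
  have hDtcy : Continuous fun y => Dt (x, y, t) :=
    hDtc.comp (continuous_const.prodMk (continuous_id.prodMk continuous_const))
  have hDtval : (∫ y in (0:ℝ)..(t+1), Dt (x, y, t)) = ∫ y in (0:ℝ)..t, Dt (x, y, t) := by
    rw [← intervalIntegral.integral_add_adjacent_intervals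
      (hDtcy.intervalIntegrable 0 t) (hDtcy.intervalIntegrable t (t+1)), htail, add_zero]
  have hdt : HasDerivAt (fun t' => ∫ y in (0:ℝ)..t', F s x y t')
      (∫ y in (0:ℝ)..t, Dt (x, y, t)) t := by
    rw [← hDtval]
    exact hderT.congr_of_eventuallyEq hev
  -- Step 2: x-derivative
  have hdx : HasDerivAt (fun x' => ∫ y in (0:ℝ)..t, F s x' y t)
      (∫ y in (0:ℝ)..t, Dx (x, y, t)) x := by
    refine hasDerivAt_param_integral (G := fun u y => F s u y t)
      (G' := fun u y => Dx (u, y, t)) ?_ ?_ (fun u y => hDx u y t) 0 t x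
    · exact hfc.comp (continuous_fst.prodMk (continuous_snd.prodMk continuous_const))
    · exact hDxc.comp (continuous_fst.prodMk (continuous_snd.prodMk continuous_const))
  refine ⟨_, _, hdt, hdx, ?_⟩
  -- Step 3: the identity
  have hDxcy : Continuous fun y => Dx (x, y, t) :=
    hDxc.comp (continuous_const.prodMk (continuous_id.prodMk continuous_const))
  have hDycy : Continuous fun y => Dy (x, y, t) :=
    hDyc.comp (continuous_const.prodMk (continuous_id.prodMk continuous_const))
  have hIy : (∫ y in (0:ℝ)..t, Dy (x, y, t)) = - F s x 0 t := by
    rw [intervalIntegral.integral_eq_sub_of_hasDerivAt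
      (fun y _ => hDy x y t) (hDycy.intervalIntegrable 0 t), hmem s x t t le_rfl, zero_sub]
  have hPDEae : ∀ᵐ y ∂(volume : Measure ℝ), y ∈ Set.uIoc 0 t →
      Dt (x, y, t) + A s x * Dx (x, y, t) + Dy (x, y, t) = -μ * F s x y t := by
    have hne : ∀ᵐ y : ℝ ∂(volume : Measure ℝ), y ≠ t := by
      refine (MeasureTheory.ae_iff).2 ?_
      simp [measure_singleton]
    filter_upwards [hne] with y hyne hy
    rw [Set.uIoc_of_le ht.le] at hy
    have h2 : y < t := lt_of_le_of_ne hy.2 hyne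
    have hp := hPDE s x y t ht hy.1 h2
    rwa [(hDt x y t).deriv, (hDx x y t).deriv, (hDy x y t).deriv] at hp
  have hcomb : (∫ y in (0:ℝ)..t, Dt (x, y, t)) + A s x * (∫ y in (0:ℝ)..t, Dx (x, y, t))
      + (∫ y in (0:ℝ)..t, Dy (x, y, t)) = -μ * ∫ y in (0:ℝ)..t, F s x y t := by
    have hsum : (∫ y in (0:ℝ)..t, Dt (x, y, t)) + A s x * (∫ y in (0:ℝ)..t, Dx (x, y, t))
        + (∫ y in (0:ℝ)..t, Dy (x, y, t))
        = ∫ y in (0:ℝ)..t, (Dt (x, y, t) + A s x * Dx (x, y, t) + Dy (x, y, t)) := by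
      rw [intervalIntegral.integral_add (f := fun y => Dt (x, y, t) + A s x * Dx (x, y, t)) (g := fun y => Dy (x, y, t)) (((hDtcy).add ((continuous_const.mul hDxcy : Continuous fun y => A s x * Dx (x, y, t))) : Continuous fun y => Dt (x, y, t) + A s x * Dx (x, y, t)).intervalIntegrable 0 t)
        (hDycy.intervalIntegrable 0 t),
        intervalIntegral.integral_add (f := fun y => Dt (x, y, t)) (g := fun y => A s x * Dx (x, y, t)) (hDtcy.intervalIntegrable 0 t)
        (((continuous_const.mul hDxcy : Continuous fun y => A s x * Dx (x, y, t))).intervalIntegrable 0 t),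
        intervalIntegral.integral_const_mul]
    rw [hsum, intervalIntegral.integral_congr_ae hPDEae, intervalIntegral.integral_const_mul]
  have hbd := hbdry s x t ht
  have hkron : ∑ j : Fin S, (if s = j then (1:ℝ) else 0) * ∫ y in (0:ℝ)..t, F j x y t
      = ∫ y in (0:ℝ)..t, F s x y t := by
    simp [ite_mul]
  have hrhs : μ * ∑ j : Fin S, (q s j - if s = j then (1:ℝ) else 0) * ∫ y in (0:ℝ)..t, F j x y t
      = μ * (∑ j : Fin S, q s j * ∫ y in (0:ℝ)..t, F j x y t)
        - μ * ∫ y in (0:ℝ)..t, F s x y t := by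
    rw [← hkron, ← mul_sub, ← Finset.sum_sub_distrib]
    congr 1
    refine Finset.sum_congr rfl fun j _ => ?_
    ring
  rw [hrhs, ← hbd]
  have := hIy
  linarith [hcomb, hIy]
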